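/- Let C ⊆ E be a convex set, V ⊆ E a linear subspace with orthogonal projection π_V, and let a ∈ C + V^⊥. Then N(π_V(C), π_V(a)) = N(C + V^⊥, a) + V^⊥. If moreover a ∈ C, then N(C + V^⊥, a) = N(C,a) ∩ V. -/

import Mathlib

open scoped Pointwise RealInnerProductSpace

variable {E : Type*} [NormedAddCommGroup E] [InnerProductSpace ℝ E] [FiniteDimensional ℝ E]

/-- `F` is a face of the convex set `C`: a convex subset of `C` such that whenever an open
segment between two points of `C` meets `F`, both endpoints belong to `F`. -/
def IsFace (C F : Set E) : Prop :=
  Convex ℝ F ∧ F ⊆ C ∧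
    ∀ x ∈ C, ∀ y ∈ C, (openSegment ℝ x y ∩ F).Nonempty → x ∈ F ∧ y ∈ F

/-- The exposed face `F⊥(C,u)` of `C` by the vector `u`: the points of `C` where `⟨u,·⟩`
attains its supremum over `C`. -/
def expFace (C : Set E) (u : E) : Set E :=
  {x ∈ C | ∀ y ∈ C, ⟪u, y⟫ ≤ ⟪u, x⟫}

/-- `F` is an exposed face of `C`: either `∅`, or `C`, or `F⊥(C,u)` for some nonzero `u`. -/
def IsExpFace (C F : Set E) : Prop :=
  F = ∅ ∨ F = C ∨ ∃ u : E, u ≠ 0 ∧ F = expFace C u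

/-- The normal cone `N(C,x)` of `C` at the point `x`. -/
def normalCone (C : Set E) (x : E) : Set E :=
  {u | ∀ y ∈ C, ⟪u, y - x⟫ ≤ 0}

/-- The normal cone `N(C,F)` of `C` at a subset `F`; for a nonempty convex `F ⊆ C` it agrees
with `normalCone C x` for any `x` in the relative interior of `F` (all these coincide), and
for `F = ∅` it is all of `E`. -/
def normalConeOf (C F : Set E) : Set E :=
  ⋂ x ∈ intrinsicInterior ℝ F, normalCone C x

/-- `N` is a normal cone of `C`: the normal cone of some face of `C`. -/
def IsNormalCone (C N : Set E) : Prop :=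
  ∃ F, IsFace C F ∧ N = normalConeOf C F

/-- `T` is a touching cone of `C`: a nonempty face of a normal cone of `C`. -/
def IsTouchingCone (C T : Set E) : Prop :=
  T.Nonempty ∧ ∃ N, IsNormalCone C N ∧ IsFace N T

/-- The positive hull of a set: all finite nonnegative combinations (`posHull ∅ = {0}`). -/
def posHull (S : Set E) : Set E :=
  {x | ∃ (k : ℕ) (c : Fin k → ℝ) (s : Fin k → E),
    (∀ i, 0 ≤ c i) ∧ (∀ i, s i ∈ S) ∧ x = ∑ i, c i • s i}

/-- A vector `u` is sharp normal for `C` if every `x ∈ ri(F⊥(C,u))` satisfies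
`u ∈ ri(N(C,x))`. -/
def SharpNormal (C : Set E) (u : E) : Prop :=
  ∀ x ∈ intrinsicInterior ℝ (expFace C u), u ∈ intrinsicInterior ℝ (normalCone C x)

/-- A point `x` is sharp exposed in `C` if every nonzero `u ∈ ri(N(C,x))` satisfies
`x ∈ ri(F⊥(C,u))`. -/
def SharpExposed (C : Set E) (x : E) : Prop :=
  ∀ u ∈ intrinsicInterior ℝ (normalCone C x), u ≠ 0 → x ∈ intrinsicInterior ℝ (expFace C u)

/-- The smallest exposed face of `C` containing `F`: the intersection of all exposed faces
of `C` containing `F`. -/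
def supExp (C F : Set E) : Set E :=
  ⋂₀ {G | IsExpFace C G ∧ F ⊆ G}

/-- The polar body of `K`. -/
def polarBody (K : Set E) : Set E := {u | ∀ y ∈ K, ⟪u, y⟫ ≤ 1}

/-- For convex `C`, a subspace `V` and `a ∈ C + V^⊥`:
`N(π_V(C), π_V(a)) = N(C + V^⊥, a) + V^⊥`, and if `a ∈ C` then
`N(C + V^⊥, a) = N(C,a) ∩ V`. -/
theorem stmt_10 (C : Set E) (hC : Convex ℝ C) (V : Submodule ℝ E) (a : E)
    (ha : a ∈ C + ((Vᗮ : Submodule ℝ E) : Set E)) :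
    normalCone ((fun z : E => (Submodule.orthogonalProjection V z : E)) '' C)
        ((Submodule.orthogonalProjection V a : E)) =
      normalCone (C + ((Vᗮ : Submodule ℝ E) : Set E)) a +
        ((Vᗮ : Submodule ℝ E) : Set E) ∧
    (a ∈ C → normalCone (C + ((Vᗮ : Submodule ℝ E) : Set E)) a =
      normalCone C a ∩ (V : Set E)) := by
  classical
  set P : E → E := fun z => (Submodule.orthogonalProjection V z : E) with hP
  have hPmem : ∀ z : E, P z ∈ V := fun z => (Submodule.orthogonalProjection V z).2
  have hsub : ∀ z : E, z - P z ∈ Vᗮ := fun z => Submodule.sub_starProjection_mem_orthogonal z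
  -- inner product of something in V with something in Vᗮ is zero
  have hzero : ∀ {x y : E}, x ∈ V → y ∈ Vᗮ → ⟪x, y⟫ = 0 :=
    fun hx hy => Submodule.inner_right_of_mem_orthogonal hx hy
  have hzero' : ∀ {x y : E}, x ∈ Vᗮ → y ∈ V → ⟪x, y⟫ = 0 := by
    intro x y hx hy; rw [real_inner_comm]; exact hzero hy hx
  -- for v ∈ V, ⟪u, v⟫ = ⟪P u, v⟫
  have hPinner : ∀ (u : E) {v : E}, v ∈ V → ⟪u, v⟫ = ⟪P u, v⟫ := by
    intro u v hv
    have : ⟪u - P u, v⟫ = 0 := hzero' (hsub u) hv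
    rw [inner_sub_left] at this
    linarith
  constructor
  · ext u
    constructor
    · intro hu
      refine Set.mem_add.2 ⟨P u, ?_, u - P u, hsub u, by abel⟩
      intro y hy
      obtain ⟨c, hc, w, hw, rfl⟩ := Set.mem_add.1 hy
      have hd : c + w - a = (P c - P a) + ((c - P c) + w - (a - P a)) := by abel
      have hr : (c - P c) + w - (a - P a) ∈ Vᗮ :=
        Submodule.sub_mem _ (Submodule.add_mem _ (hsub c) hw) (hsub a)
      have hV : P c - P a ∈ V := Submodule.sub_mem _ (hPmem c) (hPmem a)
      have h1 : ⟪P u, c + w - a⟫ = ⟪P u, P c - P a⟫ := by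
        rw [hd, inner_add_right, hzero (hPmem u) hr, add_zero]
      have h2 : ⟪P u, P c - P a⟫ = ⟪u, P c - P a⟫ := (hPinner u hV).symm
      have h3 : ⟪u, P c - P a⟫ ≤ 0 := hu (P c) ⟨c, hc, rfl⟩
      rw [h1, h2]; exact h3
    · intro hu
      obtain ⟨n, hn, w, hw, rfl⟩ := Set.mem_add.1 hu
      intro y hy
      obtain ⟨c, hc, rfl⟩ := hy
      have hV : P c - P a ∈ V := Submodule.sub_mem _ (hPmem c) (hPmem a)
      have h1 : ⟪n + w, P c - P a⟫ = ⟪n, P c - P a⟫ := by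
        rw [inner_add_left, hzero' hw hV, add_zero]
      have hd : P c - P a = (c + ((a - P a) - (c - P c))) - a := by abel
      have hm : c + ((a - P a) - (c - P c)) ∈ C + ((Vᗮ : Submodule ℝ E) : Set E) :=
        Set.mem_add.2 ⟨c, hc, (a - P a) - (c - P c), Submodule.sub_mem _ (hsub a) (hsub c), rfl⟩
      have h2 : ⟪n, P c - P a⟫ ≤ 0 := by rw [hd]; exact hn _ hm
      rw [h1]; exact h2
  · intro haC
    ext u
    constructor
    · intro hu
      constructor
      · intro y hy
        exact hu y (Set.mem_add.2 ⟨y, hy, 0, Submodule.zero_mem _, add_zero y⟩)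
      · have hV : u ∈ Vᗮᗮ := by
          rw [Submodule.mem_orthogonal']
          intro w hw
          have h1 : ⟪u, (a + w) - a⟫ ≤ 0 :=
            hu _ (Set.mem_add.2 ⟨a, haC, w, hw, rfl⟩)
          have h2 : ⟪u, (a + -w) - a⟫ ≤ 0 :=
            hu _ (Set.mem_add.2 ⟨a, haC, -w, Submodule.neg_mem _ hw, rfl⟩)
          simp only [add_sub_cancel_left] at h1 h2
          rw [inner_neg_right] at h2
          linarith
        rwa [Submodule.orthogonal_orthogonal] at hV
    · rintro ⟨hn, hV⟩ y hy
      obtain ⟨c, hc, w, hw, rfl⟩ := Set.mem_add.1 hy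
      have : c + w - a = (c - a) + w := by abel
      rw [this, inner_add_right, hzero hV hw, add_zero]
      exact hn c hc
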